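/- Let H₁,...,H_m be mutually unbiased Hadamard matrices of order n over the rationals, let p be a prime dividing √n, and reduce the matrices modulo p to matrices over F_q (q = p^r). Then for any nonzero elements X, Y of the F_q-matrix algebra generated by the reductions of H₁,...,H_m, and nonzero α_x, α_y ∈ F_q, the row spaces of N_x = [X | α_x I_n] and N_y = [Y | α_y I_n] satisfy: the row space of N_x intersects the dual of the row space of N_y trivially. Hence the set of all such row spaces is an LCD subspace code in F_q^{2n}. -/

import Mathlib

open Matrix

/-- The Euclidean dual of a linear code `C ⊆ F^ι`:
all vectors orthogonal (w.r.t. the standard bilinear form) to every codeword. -/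
def dualCode (F : Type*) [Field F] {ι : Type*} [Fintype ι]
    (C : Submodule F (ι → F)) : Submodule F (ι → F) where
  carrier := {v | ∀ c ∈ C, v ⬝ᵥ c = 0}
  add_mem' := by
    intro a b ha hb c hc
    simp [add_dotProduct, ha c hc, hb c hc]
  zero_mem' := by intro c hc; simp
  smul_mem' := by
    intro r a ha c hc
    simp [smul_dotProduct, ha c hc]

/-- The row space of a matrix: the span of its rows. -/
def rowSpace (F : Type*) [Field F] {κ ι : Type*} (G : Matrix κ ι F) :
    Submodule F (ι → F) := Submodule.span F (Set.range fun k => G k)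

/-- Mutually unbiased Hadamard matrices of order `n`, `p ∣ √n`,
reduced mod `p`: row spaces of `[X | αx I]` for nonzero `X` in the generated
algebra and `αx ≠ 0` pairwise intersect duals trivially (an LCD subspace code). -/
theorem stmt12 (F : Type*) [Field F] [Fintype F] {p : ℕ} (hp : p.Prime)
    [CharP F p] {n s m : ℕ} (hs : s * s = n) (hps : p ∣ s)
    (H : Fin m → Matrix (Fin n) (Fin n) ℤ)
    (hent : ∀ i a b, H i a b = 1 ∨ H i a b = -1)
    (hHad : ∀ i, H i * (H i)ᵀ = (n : ℤ) • 1)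
    (hunb : ∀ i j, i ≠ j → ∃ L : Matrix (Fin n) (Fin n) ℤ,
      (∀ a b, L a b = 1 ∨ L a b = -1) ∧ L * Lᵀ = (n : ℤ) • 1 ∧
        H i * (H j)ᵀ = (s : ℤ) • L)
    (X Y : Matrix (Fin n) (Fin n) F)
    (hX : X ∈ NonUnitalAlgebra.adjoin F
      (Set.range fun i => (H i).map (Int.cast : ℤ → F))) (hX0 : X ≠ 0)
    (hY : Y ∈ NonUnitalAlgebra.adjoin F
      (Set.range fun i => (H i).map (Int.cast : ℤ → F))) (hY0 : Y ≠ 0)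
    (αx αy : F) (hαx : αx ≠ 0) (hαy : αy ≠ 0) :
    rowSpace F (fromCols X (αx • (1 : Matrix (Fin n) (Fin n) F))) ⊓
      dualCode F (rowSpace F (fromCols Y (αy • (1 : Matrix (Fin n) (Fin n) F)))) = ⊥ := by
  have hsF : (s : F) = 0 := (CharP.cast_eq_zero_iff F p s).2 hps
  have hnF : (n : F) = 0 := (CharP.cast_eq_zero_iff F p n).2 (hs ▸ Dvd.dvd.mul_right hps s)
  have hbase : ∀ i j, ((H i).map (Int.cast : ℤ → F)) * (((H j).map (Int.cast : ℤ → F)))ᵀ = 0 := by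
    intro i j
    have hmap : ∀ (A B : Matrix (Fin n) (Fin n) ℤ),
        (A * Bᵀ).map (Int.cast : ℤ → F) = (A.map Int.cast) * ((B.map Int.cast))ᵀ := by
      intro A B
      ext a b
      simp only [Matrix.map_apply, Matrix.mul_apply, Matrix.transpose_apply]
      push_cast
      rfl
    rw [← hmap]
    by_cases hij : i = j
    · subst hij
      rw [hHad i]
      ext a b
      simp only [Matrix.map_apply, Matrix.smul_apply, smul_eq_mul, Matrix.zero_apply]
      push_cast
      rw [hnF, zero_mul]
    · obtain ⟨L, -, -, hL⟩ := hunb i j hij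
      rw [hL]
      ext a b
      simp only [Matrix.map_apply, Matrix.smul_apply, smul_eq_mul, Matrix.zero_apply]
      push_cast
      rw [hsF, zero_mul]
  have hkey2 : ∀ A ∈ NonUnitalAlgebra.adjoin F
      (Set.range fun i => (H i).map (Int.cast : ℤ → F)),
      ∀ B ∈ NonUnitalAlgebra.adjoin F
      (Set.range fun i => (H i).map (Int.cast : ℤ → F)), A * Bᵀ = 0 := by
    intro A hA B hB
    induction hA, hB using NonUnitalAlgebra.adjoin_induction₂ with
    | mem_mem x y hx hy =>
      obtain ⟨i, rfl⟩ := hx; obtain ⟨j, rfl⟩ := hy; exact hbase i j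
    | zero_left x hx => simp
    | zero_right x hx => simp
    | add_left x y z _ _ _ h1 h2 => rw [add_mul, h1, h2, add_zero]
    | add_right x y z _ _ _ h1 h2 => rw [transpose_add, mul_add, h1, h2, add_zero]
    | mul_left x y z _ _ _ _ h2 => rw [mul_assoc, h2, mul_zero]
    | mul_right x y z _ _ _ _ h2 => rw [transpose_mul, ← mul_assoc, h2, zero_mul]
    | smul_left r x y _ _ h => rw [smul_mul_assoc, h, smul_zero]
    | smul_right r x y _ _ h => rw [transpose_smul, mul_smul_comm, h, smul_zero]
  have hkey : X * Yᵀ = 0 := hkey2 X hX Y hY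
  have hNN : (fromCols X (αx • (1 : Matrix (Fin n) (Fin n) F))) *
      (fromCols Y (αy • (1 : Matrix (Fin n) (Fin n) F)))ᵀ = (αx * αy) • 1 := by
    rw [transpose_fromCols, fromCols_mul_fromRows, hkey, zero_add,
      Matrix.transpose_smul, Matrix.transpose_one, smul_mul_smul_comm, Matrix.one_mul]
  ext v
  simp only [Submodule.mem_inf, Submodule.mem_bot]
  constructor
  · rintro ⟨hv1, hv2⟩
    set Nx := fromCols X (αx • (1 : Matrix (Fin n) (Fin n) F)) with hNx
    set Ny := fromCols Y (αy • (1 : Matrix (Fin n) (Fin n) F)) with hNy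
    obtain ⟨u, hu⟩ := (Submodule.mem_span_range_iff_exists_fun F).1 hv1
    have hrow : ∀ l, v ⬝ᵥ Ny l = 0 := fun l =>
      hv2 (Ny l) (Submodule.subset_span ⟨l, rfl⟩)
    have hu0 : ∀ l, u l = 0 := by
      intro l
      have hvl := hrow l
      rw [← hu] at hvl
      have hcalc : (∑ k, u k • Nx k) ⬝ᵥ Ny l = ∑ k, u k * (Nx * Nyᵀ) k l := by
        simp only [dotProduct, Finset.sum_apply, Pi.smul_apply, smul_eq_mul,
          Matrix.mul_apply, Matrix.transpose_apply, Finset.sum_mul, Finset.mul_sum]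
        rw [Finset.sum_comm]
        exact Finset.sum_congr rfl fun k _ => Finset.sum_congr rfl fun j _ => by ring
      rw [hcalc, hNN] at hvl
      simp only [Matrix.smul_apply, Matrix.one_apply, smul_eq_mul] at hvl
      have h0 : u l * (αx * αy) = 0 := by
        rw [← hvl, Finset.sum_eq_single l]
        · simp
        · intro k _ hk; simp [hk]
        · simp
      rcases mul_eq_zero.1 h0 with h | h
      · exact h
      · exact absurd h (mul_ne_zero hαx hαy)
    rw [← hu]
    simp [hu0]
  · rintro rfl
    exact ⟨Submodule.zero_mem _, Submodule.zero_mem _⟩
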